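/- arXiv:1402.5245 — 8 statements merged into one kernel-verified Lean document; each statement's English description precedes it below -/
import Mathlib

section
/- For every c ≥ 1 and n ≥ c, the alternating sum over i from 0 to c-1 of (-1)^{c-1-i} · binomial(n-i-1, n-c) · binomial(n, i) equals 1. -/
lemma auxA (c n : ℕ) (hc : 1 ≤ c) (hcn : c ≤ n) :
    ∑ i ∈ Finset.range (c + 1),
      (-1 : ℤ) ^ (c - i) * ((n - i).choose (n - c)) * (n.choose i) = 0 := by
  have key : ∀ i ∈ Finset.range (c + 1),
      (-1 : ℤ) ^ (c - i) * ((n - i).choose (n - c)) * (n.choose i)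
        = (n.choose c : ℤ) * ((-1) ^ c * ((-1) ^ i * (c.choose i))) := by
    intro i hi
    rw [Finset.mem_range, Nat.lt_succ_iff] at hi
    have h1 : (n - i).choose (n - c) = (n - i).choose (c - i) := by
      rw [← Nat.choose_symm (by omega : n - c ≤ n - i)]
      congr 1
      omega
    have h2 : n.choose c * c.choose i = n.choose i * (n - i).choose (c - i) :=
      Nat.choose_mul hi
    have h3 : ((-1 : ℤ)) ^ (c - i) * (-1) ^ i = (-1) ^ c := by
      rw [← pow_add]; congr 1; omega
    have h4 : ((-1 : ℤ)) ^ (c - i) = (-1) ^ c * (-1) ^ i := by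
      have := sq_nonneg ((-1:ℤ)^i)
      have hii : ((-1:ℤ)) ^ i * (-1) ^ i = 1 := by
        rw [← pow_add, ← two_mul, pow_mul]; norm_num
      calc ((-1:ℤ)) ^ (c - i) = (-1) ^ (c-i) * ((-1)^i * (-1)^i) := by rw [hii]; ring
        _ = (-1)^c * (-1)^i := by rw [← mul_assoc, h3]
    rw [h1, h4]
    have h2' : ((n:ℤ).toNat.choose i : ℤ) = n.choose i := by norm_num
    have := congrArg (fun x : ℕ => (x : ℤ)) h2
    push_cast at this
    linear_combination ((-1:ℤ))^c * (-1)^i * this.symm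
  rw [Finset.sum_congr rfl key, ← Finset.mul_sum, ← Finset.mul_sum,
    Int.alternating_sum_range_choose, if_neg (by omega : c ≠ 0)]
  simp

theorem stmt1 (c n : ℕ) (hc : 1 ≤ c) (hcn : c ≤ n) :
    ∑ i ∈ Finset.range c,
      (-1 : ℤ) ^ (c - 1 - i) * ((n - i - 1).choose (n - c)) * (n.choose i) = 1 := by
  induction c with
  | zero => omega
  | succ c ih =>
    rcases Nat.eq_zero_or_pos c with rfl | hc0
    · have : (n - 0 - 1).choose (n - 1) = 1 := by
        rw [Nat.sub_zero, Nat.choose_self]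
      simp [this]
    · have hcn' : c ≤ n := by omega
      have hS := ih hc0 hcn'
      have hA := auxA c n hc0 hcn'
      -- Pascal: for i ≤ c, C(n-i, n-c) = C(n-i-1, n-c-1) + C(n-i-1, n-c)
      have pascal : ∀ i ∈ Finset.range (c + 1),
          (-1 : ℤ) ^ (c - i) * ((n - i).choose (n - c)) * (n.choose i)
            = (-1) ^ (c - i) * ((n - i - 1).choose (n - (c+1))) * (n.choose i)
              + (-1) ^ (c - i) * ((n - i - 1).choose (n - c)) * (n.choose i) := by
        intro i hi
        rw [Finset.mem_range, Nat.lt_succ_iff] at hi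
        have h1 : n - i = (n - i - 1) + 1 := by omega
        have h2 : n - c = (n - c - 1) + 1 := by omega
        have h3 : n - (c + 1) = n - c - 1 := by omega
        rw [h3, h1]
        conv_lhs => rw [h2]
        rw [Nat.choose_succ_succ, Nat.succ_eq_add_one, ← h2, Nat.add_sub_cancel]
        push_cast
        ring
      rw [Finset.sum_congr rfl pascal, Finset.sum_add_distrib] at hA
      -- second sum: last term (i = c) vanishes, rest is -S(c)
      have hlast : ((n - c - 1).choose (n - c) : ℤ) = 0 := by
        norm_cast
        exact Nat.choose_eq_zero_of_lt (by omega)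
      have hsplit : ∑ i ∈ Finset.range (c + 1),
          (-1 : ℤ) ^ (c - i) * ((n - i - 1).choose (n - c)) * (n.choose i)
            = ∑ i ∈ Finset.range c,
              (-1 : ℤ) ^ (c - i) * ((n - i - 1).choose (n - c)) * (n.choose i) := by
        rw [Finset.sum_range_succ, Nat.sub_self, hlast]
        ring
      have hneg : ∑ i ∈ Finset.range c,
          (-1 : ℤ) ^ (c - i) * ((n - i - 1).choose (n - c)) * (n.choose i)
            = -∑ i ∈ Finset.range c,
              (-1 : ℤ) ^ (c - 1 - i) * ((n - i - 1).choose (n - c)) * (n.choose i) := by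
        rw [← Finset.sum_neg_distrib]
        apply Finset.sum_congr rfl
        intro i hi
        rw [Finset.mem_range] at hi
        have : c - i = (c - 1 - i) + 1 := by omega
        rw [this, pow_succ]
        ring
      rw [hsplit, hneg, hS] at hA
      -- now hA : (first sum) + (-1) = 0; first sum is our goal sum (with c+1)
      have hgoal : ∑ i ∈ Finset.range (c + 1),
          (-1 : ℤ) ^ (c + 1 - 1 - i) * ((n - i - 1).choose (n - (c+1))) * (n.choose i)
            = ∑ i ∈ Finset.range (c + 1),
              (-1 : ℤ) ^ (c - i) * ((n - i - 1).choose (n - (c+1))) * (n.choose i) := by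
        apply Finset.sum_congr rfl
        intro i hi
        congr 2
      rw [hgoal]
      linarith
end

section
/- For every c ≥ 1, every n ≥ c, all p_1,...,p_n ∈ (0,1) with p_1 + ... + p_n ≤ 1, setting p_0 = 1 - (p_1+...+p_n), and for every k ∈ {1, 2, ..., c}, the alternating sum over i from 0 to c-1 of (-1)^{c-1-i} · binomial(n-i-1, n-c) · (sum over subsets J ⊆ {1,...,n} with |J| = i of (p_0 + P_J)^{k-1}) equals 1, where P_J = ∑_{j∈J} p_j. -/
open Finset

private lemma neg_one_pow_sub' {j m : ℕ} (h : j ≤ m) : (-1:ℝ)^(m-j) = (-1)^m * (-1)^j := by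
  have h0 : (-1:ℝ)^(m-j) * (-1:ℝ)^j = (-1:ℝ)^m := by rw [← pow_add, Nat.sub_add_cancel h]
  have h2 : ((-1:ℝ)^j)*((-1:ℝ)^j) = 1 := by rw [← mul_pow]; norm_num
  calc (-1:ℝ)^(m-j) = (-1:ℝ)^(m-j) * (((-1:ℝ)^j)*((-1:ℝ)^j)) := by rw [h2, mul_one]
  _ = ((-1:ℝ)^(m-j) * (-1:ℝ)^j) * (-1:ℝ)^j := by ring
  _ = (-1)^m * (-1)^j := by rw [h0]

private lemma alt_sum_choose (m : ℕ) : ∀ d : ℕ, 1 ≤ d → d ≤ m →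
    ∑ j ∈ range d, (-1 : ℝ) ^ (d - 1 - j) * ((m - j - 1).choose (m - d)) * (m.choose j) = 1 := by
  induction m with
  | zero => intro d h1 h2; omega
  | succ m ih =>
    intro d hd1 hdm
    rcases eq_or_lt_of_le hdm with hdeq | hdlt
    · -- base: d = m + 1
      subst hdeq
      have h1 : ∀ j ∈ range (m+1), (-1 : ℝ) ^ (m+1-1-j) * ((m+1-j-1).choose (m+1-(m+1))) * ((m+1).choose j)
          = (-1:ℝ)^m * ((-1:ℝ)^j * ((m+1).choose j)) := by
        intro j hj
        rw [mem_range] at hj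
        rw [show m+1-(m+1) = 0 by omega, Nat.choose_zero_right, show m+1-1-j = m-j from rfl,
          neg_one_pow_sub' (by omega : j ≤ m)]
        push_cast; ring
      rw [Finset.sum_congr rfl h1, ← Finset.mul_sum]
      have h2 : ∑ j ∈ range (m+2), (-1:ℝ)^j * ((m+1).choose j) = 0 := by
        have := Int.alternating_sum_range_choose (n := m+1)
        rw [if_neg (by omega)] at this
        have h3 : ((∑ i ∈ range (m + 1 + 1), (-1:ℤ) ^ i * ((m+1).choose i) : ℤ) : ℝ) = 0 := by
          rw [this]; norm_num
        push_cast at h3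
        convert h3 using 2
      rw [Finset.sum_range_succ, Nat.choose_self] at h2
      push_cast at h2
      have h4 : ∑ j ∈ range (m+1), (-1:ℝ)^j * ((m+1).choose j) = -((-1:ℝ)^(m+1)) := by linarith
      rw [h4, pow_succ]
      have h5 : ((-1:ℝ)^m)*((-1:ℝ)^m) = 1 := by rw [← mul_pow]; norm_num
      linear_combination h5
    · -- step: d ≤ m
      obtain ⟨e, rfl⟩ : ∃ e, d = e + 1 := ⟨d - 1, by omega⟩
      have hem : e + 1 ≤ m := by omega
      have split : ∀ j ∈ range (e+1),
          (-1:ℝ)^(e+1-1-j) * ((m+1-j-1).choose (m+1-(e+1))) * ((m+1).choose j)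
          = (-1:ℝ)^(e-j) * ((m-j-1).choose (m-(e+1))) * (m.choose j)
            + (-1:ℝ)^(e-j) * ((m-j-1).choose (m-e)) * (m.choose j)
            + (-1:ℝ)^(e-j) * ((m-j).choose (m-e)) * (if j = 0 then 0 else ((m.choose (j-1)) : ℝ)) := by
        intro j hj
        rw [mem_range] at hj
        have e0 : e + 1 - 1 - j = e - j := by omega
        have e1 : m + 1 - j - 1 = m - j := by omega
        have e2 : m + 1 - (e+1) = m - e := by omega
        have e3 : m - j = (m - j - 1) + 1 := by omega
        have e4 : m - e = (m - e - 1) + 1 := by omega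
        have e5 : m - (e+1) = m - e - 1 := by omega
        have pascal := Nat.choose_succ_succ (m-j-1) (m-e-1)
        simp only [Nat.succ_eq_add_one] at pascal
        rw [← e4, ← e3, ← e5] at pascal
        have pascalR : ((m-j).choose (m-e) : ℝ)
            = ((m-j-1).choose (m-(e+1)) : ℝ) + ((m-j-1).choose (m-e) : ℝ) := by
          exact_mod_cast congrArg (Nat.cast : ℕ → ℝ) pascal
        have pascal2 : ((m+1).choose j : ℝ) = (m.choose j : ℝ) + (if j = 0 then 0 else (m.choose (j-1) : ℝ)) := by
          cases j with
          | zero => simp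
          | succ j' =>
            simp only [Nat.choose_succ_succ, Nat.succ_ne_zero, if_false, Nat.succ_sub_one]
            push_cast; ring
        rw [e0, e1, e2, pascal2, pascalR]
        ring
      rw [Finset.sum_congr rfl split, Finset.sum_add_distrib, Finset.sum_add_distrib]
      have ihE := ih (e+1) (by omega) hem
      simp only [Nat.add_sub_cancel] at ihE
      rw [ihE]
      have hB : ∑ j ∈ range (e+1), (-1:ℝ)^(e-j) * ((m-j-1).choose (m-e)) * (m.choose j)
          = -∑ j ∈ range e, (-1:ℝ)^(e-1-j) * ((m-j-1).choose (m-e)) * (m.choose j) := by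
        rw [Finset.sum_range_succ]
        have hz : ((m-e-1).choose (m-e) : ℝ) = 0 := by
          rw [Nat.choose_eq_zero_of_lt (by omega)]; norm_num
        rw [hz]
        simp only [mul_zero, zero_mul, add_zero]
        rw [← Finset.sum_neg_distrib]
        refine Finset.sum_congr rfl fun j hj => ?_
        rw [mem_range] at hj
        rw [show e - j = (e-1-j)+1 by omega, pow_succ]
        ring
      have hC : ∑ j ∈ range (e+1), (-1:ℝ)^(e-j) * ((m-j).choose (m-e)) * (if j = 0 then 0 else ((m.choose (j-1)) : ℝ))
          = ∑ j ∈ range e, (-1:ℝ)^(e-1-j) * ((m-j-1).choose (m-e)) * (m.choose j) := by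
        rw [Finset.sum_range_succ']
        simp only [eq_self_iff_true, if_true, mul_zero, add_zero]
        refine Finset.sum_congr rfl fun j hj => ?_
        rw [mem_range] at hj
        rw [if_neg (Nat.succ_ne_zero j)]
        rw [show e - (j+1) = e-1-j by omega, show m - (j+1) = m-j-1 by omega,
          show j+1-1 = j by omega]
      rw [hB, hC]
      ring

private lemma count_lemma {s T : Finset ℕ} (hT : T ⊆ s) (i : ℕ) (h : T.card ≤ i) :
    ((Finset.powersetCard i s).filter (fun J => T ⊆ J)).card
      = (s.card - T.card).choose (i - T.card) := by
  rw [← Finset.card_sdiff_of_subset hT, ← Finset.card_powersetCard]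
  apply Finset.card_bij' (fun J _ => J \ T) (fun K _ => K ∪ T)
  · intro J hJ
    rw [Finset.mem_filter, Finset.mem_powersetCard] at hJ
    obtain ⟨⟨hJs, hJc⟩, hTJ⟩ := hJ
    rw [Finset.mem_powersetCard]
    exact ⟨Finset.sdiff_subset_sdiff hJs (Finset.Subset.refl T),
      by rw [Finset.card_sdiff_of_subset hTJ, hJc]⟩
  · intro K hK
    rw [Finset.mem_powersetCard] at hK
    obtain ⟨hKs, hKc⟩ := hK
    have hdisj : Disjoint K T := Finset.disjoint_of_subset_left hKs Finset.sdiff_disjoint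
    rw [Finset.mem_filter, Finset.mem_powersetCard]
    refine ⟨⟨Finset.union_subset (hKs.trans (Finset.sdiff_subset)) hT, ?_⟩,
      Finset.subset_union_right⟩
    rw [Finset.card_union_of_disjoint hdisj, hKc]
    omega
  · intro J hJ
    rw [Finset.mem_filter] at hJ
    exact Finset.sdiff_union_of_subset hJ.2
  · intro K hK
    rw [Finset.mem_powersetCard] at hK
    have hdisj : Disjoint K T := Finset.disjoint_of_subset_left hK.1 Finset.sdiff_disjoint
    rw [Finset.union_sdiff_distrib, Finset.sdiff_self, Finset.union_empty,
      Finset.sdiff_eq_self_of_disjoint hdisj]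

private lemma count_lemma0 {s T : Finset ℕ} (i : ℕ) (h : i < T.card) :
    ((Finset.powersetCard i s).filter (fun J => T ⊆ J)).card = 0 := by
  rw [Finset.card_eq_zero, Finset.filter_eq_empty_iff]
  intro J hJ hTJ
  rw [Finset.mem_powersetCard] at hJ
  have := Finset.card_le_card hTJ
  omega

private lemma Bsum {n c t : ℕ} (hc : 1 ≤ c) (hcn : c ≤ n) (ht : t < c) :
    ∑ i ∈ range c, (-1:ℝ)^(c-1-i) * ((n-i-1).choose (n-c)) *
      (if t ≤ i then ((n-t).choose (i-t) : ℝ) else 0) = 1 := by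
  have hsub : Finset.Ico t c ⊆ range c := by intro x hx; rw [Finset.mem_Ico] at hx; rw [mem_range]; omega
  rw [← Finset.sum_subset hsub (fun x hx hnx => by
    rw [mem_range] at hx; rw [Finset.mem_Ico] at hnx
    rw [if_neg (by omega), mul_zero])]
  rw [Finset.sum_Ico_eq_sum_range]
  refine Eq.trans ?_ (alt_sum_choose (n-t) (c-t) (by omega) (by omega))
  refine Finset.sum_congr rfl fun j hj => ?_
  rw [mem_range] at hj
  rw [if_pos (Nat.le_add_right t j)]
  rw [show c - 1 - (t + j) = (c-t) - 1 - j by omega,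
    show n - (t + j) - 1 = (n-t) - j - 1 by omega,
    show n - c = (n-t) - (c-t) by omega,
    show t + j - t = j by omega]

private lemma multinomial_mono_support {u v : Finset ℕ} (huv : u ⊆ v) (g : ℕ → ℕ)
    (h : ∀ i, g i ≠ 0 → i ∈ u) : Nat.multinomial v g = Nat.multinomial u g := by
  unfold Nat.multinomial
  rw [← Finset.sum_subset huv (fun x _ hx => by by_contra hc; exact hx (h x hc)),
    ← Finset.prod_subset huv (fun x _ hx => by
      have : g x = 0 := by by_contra hc; exact hx (h x hc)
      rw [this]; exact Nat.factorial_zero)]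

private lemma pow_expand {s J : Finset ℕ} (h0 : 0 ∉ s) (hJ : J ⊆ s) (q : ℕ → ℝ) (m : ℕ) :
    (∑ j ∈ insert 0 J, q j) ^ m
      = ∑ g ∈ Finset.piAntidiag (insert 0 s) m,
          (if s.filter (fun j => g j ≠ 0) ⊆ J then
            (Nat.multinomial (insert 0 s) g : ℝ) * ∏ i ∈ insert 0 s, q i ^ g i else 0) := by
  classical
  rw [Finset.sum_pow_eq_sum_piAntidiag, ← Finset.sum_filter]
  have hins : insert 0 J ⊆ insert 0 s := Finset.insert_subset_insert 0 hJ
  have hset : (Finset.piAntidiag (insert 0 s) m).filter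
      (fun g => s.filter (fun j => g j ≠ 0) ⊆ J) = Finset.piAntidiag (insert 0 J) m := by
    ext g
    simp only [Finset.mem_filter, Finset.mem_piAntidiag]
    constructor
    · rintro ⟨⟨hsum, hsupp⟩, hfilt⟩
      have hsupp' : ∀ i, g i ≠ 0 → i ∈ insert 0 J := by
        intro i hi
        rcases Finset.mem_insert.1 (hsupp i hi) with h0 | hs'
        · exact Finset.mem_insert.2 (Or.inl h0)
        · exact Finset.mem_insert.2 (Or.inr (hfilt (Finset.mem_filter.2 ⟨hs', hi⟩)))
      refine ⟨?_, hsupp'⟩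
      rw [← hsum]
      exact Finset.sum_subset hins (fun x _ hx => by
        by_contra hc; exact hx (hsupp' x hc))
    · rintro ⟨hsum, hsupp⟩
      have hsupp' : ∀ i, g i ≠ 0 → i ∈ insert 0 s := fun i hi => hins (hsupp i hi)
      refine ⟨⟨?_, hsupp'⟩, ?_⟩
      · rw [← hsum]
        exact (Finset.sum_subset hins (fun x _ hx => by
          by_contra hc; exact hx (hsupp x hc))).symm
      · intro x hx
        rw [Finset.mem_filter] at hx
        rcases Finset.mem_insert.1 (hsupp x hx.2) with h0' | hJ'
        · exact absurd (h0' ▸ hx.1) h0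
        · exact hJ'
  rw [hset]
  refine Finset.sum_congr rfl fun g hg => ?_
  rw [Finset.mem_piAntidiag] at hg
  rw [multinomial_mono_support hins g hg.2,
    Finset.prod_subset hins (fun x _ hx => by
      have : g x = 0 := by by_contra hc; exact hx (hg.2 x hc)
      rw [this, pow_zero])]

theorem stmt2 (c n : ℕ) (hc : 1 ≤ c) (hcn : c ≤ n) (p : ℕ → ℝ)
    (hp : ∀ j ∈ Finset.Icc 1 n, p j ∈ Set.Ioo (0 : ℝ) 1)
    (hsum : ∑ j ∈ Finset.Icc 1 n, p j ≤ 1)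
    (k : ℕ) (hk1 : 1 ≤ k) (hkc : k ≤ c) :
    ∑ i ∈ Finset.range c, (-1 : ℝ) ^ (c - 1 - i) * ((n - i - 1).choose (n - c)) *
      ∑ J ∈ Finset.powersetCard i (Finset.Icc 1 n),
        ((1 - ∑ j ∈ Finset.Icc 1 n, p j) + ∑ j ∈ J, p j) ^ (k - 1) = 1 := by
  classical
  set s : Finset ℕ := Finset.Icc 1 n with hsdef
  have h0s : (0:ℕ) ∉ s := by simp [hsdef]
  have hcard : s.card = n := by simp [hsdef]
  set q : ℕ → ℝ := fun j => if j = 0 then 1 - ∑ j ∈ s, p j else p j with hqdef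
  have hq0 : q 0 = 1 - ∑ j ∈ s, p j := by simp [hqdef]
  have hqj : ∀ J ⊆ s, ∑ j ∈ J, q j = ∑ j ∈ J, p j := by
    intro J hJ
    refine Finset.sum_congr rfl fun j hj => ?_
    have hj' := hJ hj
    rw [hsdef, Finset.mem_Icc] at hj'
    simp only [hqdef]
    rw [if_neg (by omega)]
  set m : ℕ := k - 1 with hmdef
  set A : Finset (ℕ → ℕ) := Finset.piAntidiag (insert 0 s) m with hAdef
  set w : (ℕ → ℕ) → ℝ :=
    fun g => (Nat.multinomial (insert 0 s) g : ℝ) * ∏ i ∈ insert 0 s, q i ^ g i with hwdef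
  calc
    ∑ i ∈ Finset.range c, (-1 : ℝ) ^ (c - 1 - i) * ((n - i - 1).choose (n - c)) *
      ∑ J ∈ Finset.powersetCard i s, ((1 - ∑ j ∈ s, p j) + ∑ j ∈ J, p j) ^ m
    = ∑ i ∈ Finset.range c, (-1 : ℝ) ^ (c - 1 - i) * ((n - i - 1).choose (n - c)) *
      ∑ J ∈ Finset.powersetCard i s, ∑ g ∈ A,
        (if s.filter (fun j => g j ≠ 0) ⊆ J then w g else 0) := by
      refine Finset.sum_congr rfl fun i hi => ?_
      congr 1
      refine Finset.sum_congr rfl fun J hJ => ?_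
      rw [Finset.mem_powersetCard] at hJ
      have hJs := hJ.1
      have h0J : 0 ∉ J := fun h => h0s (hJs h)
      have hrw : (1 - ∑ j ∈ s, p j) + ∑ j ∈ J, p j = ∑ j ∈ insert 0 J, q j := by
        rw [Finset.sum_insert h0J, hqj J hJs, hq0]
      rw [hrw, pow_expand h0s hJs q m]
    _ = ∑ i ∈ Finset.range c, ∑ g ∈ A, (-1 : ℝ) ^ (c - 1 - i) * ((n - i - 1).choose (n - c)) *
          ((((Finset.powersetCard i s).filter
              (fun J => s.filter (fun j => g j ≠ 0) ⊆ J)).card : ℝ) * w g) := by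
      refine Finset.sum_congr rfl fun i hi => ?_
      rw [Finset.sum_comm, Finset.mul_sum]
      refine Finset.sum_congr rfl fun g hg => ?_
      rw [← Finset.sum_filter, Finset.sum_const, nsmul_eq_mul]
    _ = ∑ g ∈ A, (∑ i ∈ Finset.range c, (-1 : ℝ) ^ (c - 1 - i) * ((n - i - 1).choose (n - c)) *
          ((((Finset.powersetCard i s).filter
              (fun J => s.filter (fun j => g j ≠ 0) ⊆ J)).card : ℝ))) * w g := by
      rw [Finset.sum_comm]
      refine Finset.sum_congr rfl fun g hg => ?_
      rw [Finset.sum_mul]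
      refine Finset.sum_congr rfl fun i hi => ?_
      ring
    _ = ∑ g ∈ A, 1 * w g := by
      refine Finset.sum_congr rfl fun g hg => ?_
      congr 1
      rw [hAdef, Finset.mem_piAntidiag] at hg
      set T : Finset ℕ := s.filter (fun j => g j ≠ 0) with hTdef
      have hTs : T ⊆ s := Finset.filter_subset _ _
      have htc : T.card < c := by
        have hle : T.card ≤ m := by
          calc T.card = ∑ _j ∈ T, 1 := Finset.card_eq_sum_ones T
          _ ≤ ∑ j ∈ T, g j := Finset.sum_le_sum (fun j hj => by
              rw [hTdef] at hj
              have := (Finset.mem_filter.1 hj).2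
              omega)
          _ ≤ ∑ j ∈ insert 0 s, g j :=
            Finset.sum_le_sum_of_subset (hTs.trans (Finset.subset_insert _ _))
          _ = m := hg.1
        omega
      have hcntR : ∀ i, ((((Finset.powersetCard i s).filter (fun J => T ⊆ J)).card : ℕ) : ℝ)
          = if T.card ≤ i then (((n - T.card).choose (i - T.card) : ℕ) : ℝ) else 0 := by
        intro i
        split_ifs with h
        · rw [count_lemma hTs i h, hcard]
        · rw [count_lemma0 i (by omega)]; norm_num
      rw [Finset.sum_congr rfl (fun i _ => by rw [hcntR i])]
      exact Bsum hc hcn htc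
    _ = (∑ j ∈ insert 0 s, q j) ^ m := by
      rw [Finset.sum_pow_eq_sum_piAntidiag]
      exact Finset.sum_congr rfl fun g _ => one_mul _
    _ = 1 := by
      rw [Finset.sum_insert h0s, hq0, hqj s (Finset.Subset.refl s)]
      norm_num
end

section
/- Let f be a convex function on an interval I and let x, y, z, t ∈ I with x < y, x < z, y < t, z < t. Then (t-y)f(z) + (z-x)f(y) ≤ (t-y)f(x) + (z-x)f(t). If moreover t + x = y + z, then f(z) + f(y) ≤ f(x) + f(t). -/
lemma chord_aux (I : Set ℝ) (f : ℝ → ℝ) (hf : ConvexOn ℝ I f)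
    (x p t : ℝ) (hx : x ∈ I) (ht : t ∈ I) (h1 : x < p) (h2 : p < t) :
    (t - x) * f p ≤ (t - p) * f x + (p - x) * f t := by
  have hxt : (0:ℝ) < t - x := by linarith
  have key := hf.2 hx ht (show (0:ℝ) ≤ (t - p) / (t - x) by apply div_nonneg <;> linarith)
    (show (0:ℝ) ≤ (p - x) / (t - x) by apply div_nonneg <;> linarith) (by field_simp; ring)
  have hp : ((t - p) / (t - x)) • x + ((p - x) / (t - x)) • t = p := by
    rw [smul_eq_mul, smul_eq_mul, div_mul_eq_mul_div, div_mul_eq_mul_div, ← add_div,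
      div_eq_iff (ne_of_gt hxt)]; ring
  rw [hp] at key
  simp only [smul_eq_mul] at key
  have := mul_le_mul_of_nonneg_left key (le_of_lt hxt)
  calc (t - x) * f p ≤ (t - x) * ((t - p) / (t - x) * f x + (p - x) / (t - x) * f t) := this
    _ = (t - p) * f x + (p - x) * f t := by field_simp

theorem stmt4 (I : Set ℝ) (f : ℝ → ℝ) (hf : ConvexOn ℝ I f)
    (x y z t : ℝ) (hx : x ∈ I) (hy : y ∈ I) (hz : z ∈ I) (ht : t ∈ I)
    (hxy : x < y) (hxz : x < z) (hyt : y < t) (hzt : z < t) :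
    (t - y) * f z + (z - x) * f y ≤ (t - y) * f x + (z - x) * f t ∧
    (t + x = y + z → f z + f y ≤ f x + f t) := by
  have hy' := chord_aux I f hf x y t hx ht hxy hyt
  have hz' := chord_aux I f hf x z t hx ht hxz hzt
  have hxt : (0:ℝ) < t - x := by linarith
  have main : (t - y) * f z + (z - x) * f y ≤ (t - y) * f x + (z - x) * f t := by
    have h1 := mul_le_mul_of_nonneg_left hz' (by linarith : (0:ℝ) ≤ t - y)
    have h2 := mul_le_mul_of_nonneg_left hy' (by linarith : (0:ℝ) ≤ z - x)
    nlinarith [h1, h2]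
  refine ⟨main, fun heq => ?_⟩
  have hty : t - y = z - x := by linarith
  rw [hty] at main
  have hzx : (0:ℝ) < z - x := by linarith
  nlinarith [main]
end

section
/- For every n ≥ 1 and every natural number k, the function F_{n,k}(x) = -(n-1)x^k + n(x + (1-x)/n)^k is monotonically increasing on the interval [0,1]. -/
theorem stmt6 (n : ℕ) (hn : 1 ≤ n) (k : ℕ) :
    MonotoneOn (fun x : ℝ => -((n : ℝ) - 1) * x ^ k + n * (x + (1 - x) / n) ^ k)
      (Set.Icc (0 : ℝ) 1) := by
  have hn1 : (1:ℝ) ≤ (n:ℝ) := by exact_mod_cast hn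
  have hn0 : (n:ℝ) ≠ 0 := by linarith
  have hderiv : ∀ x : ℝ, HasDerivAt
      (fun x : ℝ => -((n : ℝ) - 1) * x ^ k + n * (x + (1 - x) / n) ^ k)
      (((n:ℝ) - 1) * k * ((x + (1 - x) / n) ^ (k-1) - x ^ (k-1))) x := by
    intro x
    have h1 : HasDerivAt (fun x : ℝ => x + (1 - x) / n) (1 + (-1)/n) x := by
      exact (hasDerivAt_id' x).add (((hasDerivAt_id' x).const_sub 1).div_const n)
    have h2 := (h1.pow k).const_mul (n:ℝ)
    have h3 := (hasDerivAt_pow k x).const_mul (-((n:ℝ)-1))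
    have h4 := (h3.add h2 : HasDerivAt (fun x : ℝ => -((n : ℝ) - 1) * x ^ k + n * (x + (1 - x) / n) ^ k) _ x)
    refine h4.congr_deriv ?_
    have e : (n:ℝ) * (1 + -1 / n) = n - 1 := by
      rw [mul_add, mul_one, mul_div_assoc', mul_neg_one, neg_div, div_self hn0]; ring
    linear_combination ((k:ℝ) * (x + (1 - x) / (n:ℝ)) ^ (k - 1)) * e
  apply monotoneOn_of_deriv_nonneg (convex_Icc 0 1)
  · apply Continuous.continuousOn
    fun_prop
  · intro x hx
    exact (hderiv x).differentiableAt.differentiableWithinAt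
  · intro x hx
    rw [(hderiv x).deriv]
    rw [interior_Icc] at hx
    have hx0 : 0 ≤ x := hx.1.le
    have hyx : x ≤ x + (1-x)/n := by
      have : 0 ≤ (1-x)/n := div_nonneg (by linarith [hx.2.le]) (by linarith)
      linarith
    have hpow : x ^ (k-1) ≤ (x + (1-x)/n) ^ (k-1) := pow_le_pow_left₀ hx0 hyx _
    have : 0 ≤ ((n:ℝ) - 1) * k := mul_nonneg (by linarith) (Nat.cast_nonneg k)
    nlinarith [hpow]
end

section
/- For every n ≥ 2, every natural number k, and every p_0 ∈ [0,1], we have -(n-1)p_0^k + n(p_0 + (1-p_0)/n)^k ≥ -(n-1)·0^k + n·(1/n)^k, i.e. the tail probability of the time to collect 2 distinct coupons under the almost-uniform distribution with null-coupon probability p_0 is at least that under the uniform distribution (p_0 = 0). -/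
lemma stmt8_aux (N b p0 : ℝ) (hN : 2 ≤ N) (hp0l : 0 ≤ p0)
    (hbge : 1 / N ≤ b) (hbgep : p0 ≤ b) :
    ∀ j : ℕ, b = p0 + (1 - p0) / N →
      N * b ^ (j + 1) - (N - 1) * p0 ^ (j + 1) ≥ (1 / N) ^ j := by
  intro j hb
  have hNpos : (0 : ℝ) < N := by linarith
  have hNne : N ≠ 0 := ne_of_gt hNpos
  have hbnonneg : 0 ≤ b := le_trans hp0l hbgep
  induction j with
  | zero =>
    simp only [zero_add, pow_one, pow_zero, hb]
    field_simp
    nlinarith [mul_comm p0 N]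
  | succ m ih =>
    have h1 : N * b ^ (m + 2) - (N - 1) * p0 ^ (m + 2) =
        b * (N * b ^ (m + 1) - (N - 1) * p0 ^ (m + 1))
          + (N - 1) * p0 ^ (m + 1) * (b - p0) := by ring
    rw [h1]
    have hpos : (0 : ℝ) < (1 / N) ^ m := pow_pos (by positivity) m
    have h2 : b * (N * b ^ (m + 1) - (N - 1) * p0 ^ (m + 1)) ≥
        (1 / N) * (1 / N) ^ m :=
      mul_le_mul hbge ih (le_of_lt hpos) hbnonneg
    have h3 : (N - 1) * p0 ^ (m + 1) * (b - p0) ≥ 0 :=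
      mul_nonneg (mul_nonneg (by linarith) (pow_nonneg hp0l _)) (by linarith)
    have h4 : (1 / N) * (1 / N) ^ m = (1 / N) ^ (m + 1) := by ring
    linarith

theorem stmt8 (n : ℕ) (hn : 2 ≤ n) (k : ℕ) (p0 : ℝ) (hp0 : p0 ∈ Set.Icc (0 : ℝ) 1) :
    -((n : ℝ) - 1) * p0 ^ k + n * (p0 + (1 - p0) / n) ^ k ≥
      -((n : ℝ) - 1) * (0 : ℝ) ^ k + n * ((1 : ℝ) / n) ^ k := by
  obtain ⟨hp0l, hp0r⟩ := hp0
  have hn2 : (2 : ℝ) ≤ (n : ℝ) := by exact_mod_cast hn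
  have hnpos : (0 : ℝ) < n := by linarith
  have hnne : (n : ℝ) ≠ 0 := ne_of_gt hnpos
  have hq : (0 : ℝ) ≤ (1 - p0) / n := div_nonneg (by linarith) (le_of_lt hnpos)
  have hbgep : p0 ≤ p0 + (1 - p0) / n := by linarith
  have hbge : 1 / (n : ℝ) ≤ p0 + (1 - p0) / n := by
    rw [div_le_iff₀ hnpos]
    have h1 : (1 - p0) / ↑n * ↑n = 1 - p0 := div_mul_cancel₀ _ hnne
    nlinarith
  cases k with
  | zero => simp
  | succ m =>
    have h0 : (0 : ℝ) ^ (m + 1) = 0 := zero_pow (Nat.succ_ne_zero m)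
    rw [h0]
    have key := stmt8_aux n (p0 + (1 - p0) / n) p0 hn2 hp0l hbge hbgep m rfl
    have hrhs : (n : ℝ) * (1 / n) ^ (m + 1) = (1 / n) ^ m := by
      field_simp
      rw [pow_succ, mul_comm, mul_assoc, one_div_mul_cancel hnne, mul_one]
    linarith
end

section
/- For every n ≥ 2 and all p_0, p_1, ..., p_n ∈ (0,1) with p_0 + p_1 + ... + p_n = 1, we have ∑_{ℓ=1}^n p_ℓ/(1-(p_0+p_ℓ)) ≥ n/(n-1), provided 1-(p_0+p_ℓ) > 0 for each ℓ. -/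
theorem stmt11 (n : ℕ) (hn : 2 ≤ n) (p : ℕ → ℝ)
    (hp : ∀ i ∈ Finset.Icc 0 n, p i ∈ Set.Ioo (0 : ℝ) 1)
    (hsum : ∑ i ∈ Finset.Icc 0 n, p i = 1)
    (hpos : ∀ ℓ ∈ Finset.Icc 1 n, 0 < 1 - (p 0 + p ℓ)) :
    (n : ℝ) / ((n : ℝ) - 1) ≤ ∑ ℓ ∈ Finset.Icc 1 n, p ℓ / (1 - (p 0 + p ℓ)) := by
  set s := Finset.Icc 1 n with hs
  set q : ℕ → ℝ := fun ℓ => 1 - (p 0 + p ℓ) with hqdef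
  have hcard : (s.card : ℝ) = n := by
    simp [hs, Nat.card_Icc]
  have hsplit : Finset.Icc 0 n = insert 0 s := by
    rw [hs]
    ext i
    simp [Nat.lt_iff_add_one_le, Nat.one_le_iff_ne_zero]
    omega
  have h0 : ∑ ℓ ∈ s, p ℓ = 1 - p 0 := by
    have : (0 : ℕ) ∉ s := by simp [hs]
    rw [hsplit, Finset.sum_insert this] at hsum
    linarith
  have hp0 : p 0 ∈ Set.Ioo (0:ℝ) 1 := hp 0 (by simp)
  have h1p0 : 0 < 1 - p 0 := by linarith [hp0.2]
  have hqsum : ∑ ℓ ∈ s, q ℓ = ((n : ℝ) - 1) * (1 - p 0) := by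
    have : ∑ ℓ ∈ s, q ℓ = ∑ ℓ ∈ s, ((1 - p 0) - p ℓ) := by
      apply Finset.sum_congr rfl; intro ℓ _; simp [hqdef]; ring
    rw [this, Finset.sum_sub_distrib, h0, Finset.sum_const, nsmul_eq_mul, hcard]
    ring
  -- Cauchy-Schwarz: n^2 ≤ (∑ q)(∑ q⁻¹)
  have hCS : ((n : ℝ))^2 ≤ (∑ ℓ ∈ s, q ℓ) * ∑ ℓ ∈ s, (q ℓ)⁻¹ := by
    have := Finset.sum_sq_le_sum_mul_sum_of_sq_eq_mul s
      (r := fun _ => (1:ℝ)) (f := q) (g := fun ℓ => (q ℓ)⁻¹)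
      (fun i hi => (hpos i hi).le)
      (fun i hi => inv_nonneg.2 (hpos i hi).le)
      (fun i hi => by field_simp [ne_of_gt (hpos i hi)]; exact (div_self (ne_of_gt (hpos i hi))).symm)
    simpa [hcard] using this
  have hn1 : (0:ℝ) < (n:ℝ) - 1 := by
    have : (2:ℝ) ≤ (n:ℝ) := by exact_mod_cast hn
    linarith
  have hinv : ((n:ℝ))^2 / (((n:ℝ) - 1) * (1 - p 0)) ≤ ∑ ℓ ∈ s, (q ℓ)⁻¹ := by
    rw [div_le_iff₀ (by positivity)]
    rw [hqsum] at hCS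
    linarith [hCS]
  have hrw : ∑ ℓ ∈ s, p ℓ / (1 - (p 0 + p ℓ)) =
      (1 - p 0) * (∑ ℓ ∈ s, (q ℓ)⁻¹) - n := by
    have step : ∀ ℓ ∈ s, p ℓ / (1 - (p 0 + p ℓ)) = (1 - p 0) * (q ℓ)⁻¹ - 1 := by
      intro ℓ hℓ
      have hq := hpos ℓ hℓ
      rw [eq_sub_iff_add_eq, div_add' _ _ _ (ne_of_gt hq)]
      field_simp [hqdef]
      simp only [hqdef]
      field_simp [hq.ne']
      ring
    rw [Finset.sum_congr rfl step, Finset.sum_sub_distrib, Finset.sum_const, nsmul_eq_mul,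
      hcard, Finset.mul_sum]
    ring
  rw [hrw]
  have key : ((n:ℝ))^2 / ((n:ℝ) - 1) ≤ (1 - p 0) * ∑ ℓ ∈ s, (q ℓ)⁻¹ := by
    calc ((n:ℝ))^2 / ((n:ℝ) - 1)
        = (1 - p 0) * (((n:ℝ))^2 / (((n:ℝ) - 1) * (1 - p 0))) := by
          field_simp
      _ ≤ (1 - p 0) * ∑ ℓ ∈ s, (q ℓ)⁻¹ := by
          exact mul_le_mul_of_nonneg_left hinv h1p0.le
  have : (n : ℝ) / ((n : ℝ) - 1) = ((n:ℝ))^2 / ((n:ℝ) - 1) - n := by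
    field_simp; ring
  rw [this]
  linarith
end

section
/- Define E(c,n,p) for 1 ≤ c ≤ n and p = (p_1,...,p_n) ∈ (0,1)^n with ∑ p_i ≤ 1 recursively by E(1,n,p) = 1/(1-p_0) where p_0 = 1 - ∑_{i=1}^n p_i, and E(c,n,p) = (1/(1-p_0))(1 + ∑_{ℓ=1}^n p_ℓ · E(c-1, n-1, p^{(ℓ)})) for c ≥ 2, where p^{(ℓ)} is p with entry p_ℓ removed. Then E(c,n,p) ≥ n(H_n - H_{n-c})/(1-p_0) ≥ n(H_n - H_{n-c}). -/
open Finset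

private noncomputable def Hh (n : ℕ) : ℝ := ∑ i ∈ Finset.Icc 1 n, (1:ℝ)/i

private lemma Hh_succ (n : ℕ) : Hh (n+1) = Hh n + 1/(n+1 : ℝ) := by
  rw [Hh, Hh, Finset.sum_Icc_succ_top (by omega)]
  push_cast
  ring

private lemma Hh_mono {a b : ℕ} (h : a ≤ b) : Hh a ≤ Hh b := by
  apply Finset.sum_le_sum_of_subset_of_nonneg
  · exact Finset.Icc_subset_Icc_right h
  · intro i _ _
    positivity

private lemma amhm {m : ℕ} (hm : 1 ≤ m) (p : Fin (m+1) → ℝ) (hp : ∀ i, 0 < p i)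
    (hSp : ∀ ℓ, 0 < (∑ i, p i) - p ℓ) :
    ((m:ℝ)+1)/m ≤ ∑ ℓ, p ℓ / ((∑ i, p i) - p ℓ) := by
  set S := ∑ i, p i with hS
  have hSpos : 0 < S := Finset.sum_pos (fun i _ => hp i) ⟨0, Finset.mem_univ 0⟩
  have hmpos : (0:ℝ) < m := by exact_mod_cast hm
  have hsed := Finset.sq_sum_div_le_sum_sq_div Finset.univ (fun _ : Fin (m+1) => (1:ℝ))
      (g := fun ℓ => S - p ℓ) (fun ℓ _ => hSp ℓ)
  have hsum1 : ∑ ℓ : Fin (m+1), (S - p ℓ) = m * S := by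
    rw [Finset.sum_sub_distrib, ← hS]
    simp [Finset.card_univ]
    ring
  have key : ((m:ℝ)+1)^2 / (m * S) ≤ ∑ ℓ : Fin (m+1), 1 / (S - p ℓ) := by
    simpa [hsum1, Finset.card_univ, one_pow] using hsed
  have hrw : ∀ ℓ : Fin (m+1), p ℓ / (S - p ℓ) = S * (1 / (S - p ℓ)) - 1 := by
    intro ℓ
    rw [mul_one_div, div_sub_one (hSp ℓ).ne']
    ring_nf
  calc ((m:ℝ)+1)/m = S * (((m:ℝ)+1)^2 / (m * S)) - (m+1) := by
        field_simp; ring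
    _ ≤ S * (∑ ℓ : Fin (m+1), 1 / (S - p ℓ)) - (m+1) := by
        have := mul_le_mul_of_nonneg_left key hSpos.le
        linarith
    _ = ∑ ℓ, p ℓ / (S - p ℓ) := by
        rw [Finset.sum_congr rfl (fun ℓ _ => hrw ℓ), Finset.sum_sub_distrib,
          ← Finset.mul_sum]
        simp [Finset.card_univ]

private lemma mainlem (E : (c : ℕ) → (n : ℕ) → (Fin n → ℝ) → ℝ)
    (hE1 : ∀ (n : ℕ) (p : Fin n → ℝ), E 1 n p = 1 / (1 - (1 - ∑ i, p i)))
    (hErec : ∀ (c n : ℕ) (p : Fin (n + 1) → ℝ), 2 ≤ c →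
      E c (n + 1) p = (1 / (1 - (1 - ∑ i, p i))) *
        (1 + ∑ ℓ, p ℓ * E (c - 1) n (fun j => p (ℓ.succAbove j)))) :
    ∀ (c : ℕ), 1 ≤ c → ∀ (n : ℕ), c ≤ n → ∀ (p : Fin n → ℝ), (∀ i, 0 < p i) →
      (∑ i, p i) ≤ 1 → (n : ℝ) * (Hh n - Hh (n - c)) / (∑ i, p i) ≤ E c n p := by
  intro c
  induction c with
  | zero => omega
  | succ k ih =>
    intro _ n hcn p hp hsum
    obtain ⟨m, rfl⟩ : ∃ m, n = m + 1 := ⟨n - 1, by omega⟩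
    have hSpos : 0 < ∑ i, p i :=
      Finset.sum_pos (fun i _ => hp i) Finset.univ_nonempty
    rcases Nat.eq_zero_or_pos k with hk | hk
    · -- base case c = 1
      subst hk
      rw [hE1 (m+1) p]
      have hH : Hh (m+1) - Hh (m+1-1) = 1/((m:ℝ)+1) := by
        simp only [Nat.add_sub_cancel, Hh_succ]
        ring
      rw [hH, show (1 : ℝ) - (1 - ∑ i, p i) = ∑ i, p i by ring]
      have hm0 : ((m:ℝ)+1) ≠ 0 := by positivity
      rw [show ((m+1:ℕ):ℝ) * (1/((m:ℝ)+1)) = 1 by push_cast; field_simp]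
    · -- inductive case
      have hm : 1 ≤ m := by omega
      have hmpos : (0:ℝ) < m := by exact_mod_cast hm
      set S := ∑ i, p i with hSdef
      have hsplit : ∀ ℓ : Fin (m+1), S = p ℓ + ∑ j, p (ℓ.succAbove j) :=
        fun ℓ => Fin.sum_univ_succAbove p ℓ
      have hSp : ∀ ℓ : Fin (m+1), 0 < S - p ℓ := by
        intro ℓ
        rw [hsplit ℓ]
        have : Nonempty (Fin m) := ⟨⟨0, hm⟩⟩
        have := Finset.sum_pos (fun j (_ : j ∈ Finset.univ) => hp (ℓ.succAbove j))
          Finset.univ_nonempty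
        linarith
      set A := (m:ℝ) * (Hh m - Hh (m - k)) with hAdef
      have hA : 0 ≤ A := by
        have h0 := Hh_mono (show m - k ≤ m by omega)
        have : 0 ≤ Hh m - Hh (m - k) := by linarith
        positivity
      have hIH : ∀ ℓ : Fin (m+1), A / (S - p ℓ) ≤ E k m (fun j => p (ℓ.succAbove j)) := by
        intro ℓ
        have hs : ∑ j, p (ℓ.succAbove j) = S - p ℓ := by
          have := hsplit ℓ; linarith
        have := ih hk m (by omega) (fun j => p (ℓ.succAbove j)) (fun j => hp _)
          (by rw [hs]; have := hp ℓ; linarith)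
        rwa [hs] at this
      rw [hErec (k+1) m p (by omega)]
      simp only [Nat.add_sub_cancel]
      rw [show (1 : ℝ) - (1 - S) = S by ring]
      have hsum_ge : A * (((m:ℝ)+1)/m) ≤ ∑ ℓ, p ℓ * E k m (fun j => p (ℓ.succAbove j)) := by
        have h1 : ∑ ℓ, p ℓ * (A / (S - p ℓ)) ≤ ∑ ℓ, p ℓ * E k m (fun j => p (ℓ.succAbove j)) :=
          Finset.sum_le_sum (fun ℓ _ => mul_le_mul_of_nonneg_left (hIH ℓ) (hp ℓ).le)
        have h3 := amhm hm p hp (fun ℓ => by rw [← hSdef]; exact hSp ℓ)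
        rw [← hSdef] at h3
        have h2 : A * (((m:ℝ)+1)/m) ≤ ∑ ℓ, p ℓ * (A / (S - p ℓ)) := by
          calc A * (((m:ℝ)+1)/m) ≤ A * ∑ ℓ, p ℓ / (S - p ℓ) :=
                mul_le_mul_of_nonneg_left h3 hA
            _ = ∑ ℓ, p ℓ * (A / (S - p ℓ)) := by
                rw [Finset.mul_sum]
                exact Finset.sum_congr rfl (fun ℓ _ => by ring)
        linarith
      have htarget : ((m:ℝ)+1) * (Hh (m+1) - Hh (m+1 - (k+1))) = 1 + A * (((m:ℝ)+1)/m) := by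
        have hmk : m + 1 - (k+1) = m - k := by omega
        rw [hmk, Hh_succ, hAdef]
        field_simp
        ring
      calc ((m+1 : ℕ):ℝ) * (Hh (m+1) - Hh (m+1 - (k+1))) / S
          = (1 + A * (((m:ℝ)+1)/m)) / S := by
            rw [show ((m+1 : ℕ):ℝ) = (m:ℝ)+1 by push_cast; ring, htarget]
        _ ≤ (1 + ∑ ℓ, p ℓ * E k m (fun j => p (ℓ.succAbove j))) / S := by
            apply div_le_div_of_nonneg_right ?_ hSpos.le
            linarith
        _ = (1 / S) * (1 + ∑ ℓ, p ℓ * E k m (fun j => p (ℓ.succAbove j))) := by ring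

theorem stmt12 (E : (c : ℕ) → (n : ℕ) → (Fin n → ℝ) → ℝ)
    (hE1 : ∀ (n : ℕ) (p : Fin n → ℝ), E 1 n p = 1 / (1 - (1 - ∑ i, p i)))
    (hErec : ∀ (c n : ℕ) (p : Fin (n + 1) → ℝ), 2 ≤ c →
      E c (n + 1) p = (1 / (1 - (1 - ∑ i, p i))) *
        (1 + ∑ ℓ, p ℓ * E (c - 1) n (fun j => p (ℓ.succAbove j))))
    (c n : ℕ) (hc : 1 ≤ c) (hcn : c ≤ n) (p : Fin n → ℝ)
    (hp : ∀ i, p i ∈ Set.Ioo (0 : ℝ) 1) (hsum : ∑ i, p i ≤ 1) :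
    E c n p ≥ (n : ℝ) * ((∑ i ∈ Finset.Icc 1 n, (1 : ℝ) / i) -
        ∑ i ∈ Finset.Icc 1 (n - c), (1 : ℝ) / i) / (1 - (1 - ∑ i, p i)) ∧
    (n : ℝ) * ((∑ i ∈ Finset.Icc 1 n, (1 : ℝ) / i) -
        ∑ i ∈ Finset.Icc 1 (n - c), (1 : ℝ) / i) / (1 - (1 - ∑ i, p i)) ≥
      (n : ℝ) * ((∑ i ∈ Finset.Icc 1 n, (1 : ℝ) / i) -
        ∑ i ∈ Finset.Icc 1 (n - c), (1 : ℝ) / i) := by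
  have hp' : ∀ i, 0 < p i := fun i => (hp i).1
  have hSpos : 0 < ∑ i, p i := by
    have : 0 < n := by omega
    have : Nonempty (Fin n) := ⟨⟨0, this⟩⟩
    exact Finset.sum_pos (fun i _ => hp' i) Finset.univ_nonempty
  have hm := mainlem E hE1 hErec c hc n hcn p hp' hsum
  rw [show (1 : ℝ) - (1 - ∑ i, p i) = ∑ i, p i by ring]
  have hX : 0 ≤ (n : ℝ) * ((∑ i ∈ Finset.Icc 1 n, (1 : ℝ) / i) -
      ∑ i ∈ Finset.Icc 1 (n - c), (1 : ℝ) / i) := by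
    have h0 := Hh_mono (show n - c ≤ n by omega)
    have : (0:ℝ) ≤ Hh n - Hh (n - c) := by linarith
    rw [Hh, Hh] at this
    positivity
  constructor
  · exact hm
  · rw [ge_iff_le, le_div_iff₀ hSpos]
    calc (n : ℝ) * ((∑ i ∈ Finset.Icc 1 n, (1 : ℝ) / i) -
        ∑ i ∈ Finset.Icc 1 (n - c), (1 : ℝ) / i) * (∑ i, p i)
        ≤ _ * 1 := by apply mul_le_mul_of_nonneg_left hsum hX
      _ = _ := by ring
end

section
/- For n ≥ 1 and k ≥ n, the probability of having collected all n coupons within k draws under the almost-uniform distribution with null probability p_0 satisfies Pr{T_{n,n}(v) ≤ k} = ∑_{k_0=0}^{k-n} C(k,k_0) p_0^{k_0} (1-p_0)^{k-k_0} · Pr{T_{n,n}(u) ≤ k-k_0}, and consequently Pr{T_{n,n}(v) ≤ k} ≤ Pr{T_{n,n}(u) ≤ k}. -/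
open Finset

/-- Probability that `m` uniform draws from `n` coupons yield all `n` coupons. -/
noncomputable def probFullUniform (n m : ℕ) : ℝ :=
  (1 / (n : ℝ) ^ m) *
    ∑ t ∈ (Finset.Nat.antidiagonalTuple n m).filter (fun t => ∀ i, 0 < t i),
      (m.factorial : ℝ) / ∏ i, ((t i).factorial : ℝ)

/-- Probability that `k` draws, each null with probability `p0` and otherwise uniform over
`n` coupons, yield all `n` coupons (multinomial form). -/
noncomputable def probFullAlmostUniform (n k : ℕ) (p0 : ℝ) : ℝ :=
  ∑ k0 ∈ Finset.range (k - n + 1),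
    ∑ t ∈ (Finset.Nat.antidiagonalTuple n (k - k0)).filter (fun t => ∀ i, 0 < t i),
      ((k.factorial : ℝ) / ((k0.factorial : ℝ) * ∏ i, ((t i).factorial : ℝ))) *
        p0 ^ k0 * ((1 - p0) / n) ^ (k - k0)

noncomputable def sumN (n m : ℕ) : ℝ :=
  ∑ t ∈ (Finset.Nat.antidiagonalTuple n m).filter (fun t => ∀ i, 0 < t i),
    (m.factorial : ℝ) / ∏ i, ((t i).factorial : ℝ)

lemma sumN_nonneg (n m : ℕ) : 0 ≤ sumN n m := by
  apply Finset.sum_nonneg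
  intro t ht
  positivity

lemma sumN_step (n m : ℕ) : (n : ℝ) * sumN n m ≤ sumN n (m + 1) := by
  have hprod_pos : ∀ t : Fin n → ℕ, (0:ℝ) < ∏ i, ((t i).factorial : ℝ) := by
    intro t; positivity
  -- rewrite sumN n (m+1) with the per-term identity
  have key : sumN n (m+1) = ∑ i : Fin n,
      ∑ t ∈ (Finset.Nat.antidiagonalTuple n (m+1)).filter (fun t => ∀ i, 0 < t i),
        (t i : ℝ) * ((m.factorial : ℝ) / ∏ j, ((t j).factorial : ℝ)) := by
    rw [Finset.sum_comm]
    unfold sumN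
    apply Finset.sum_congr rfl
    intro t ht
    rw [← Finset.sum_mul]
    simp only [Finset.mem_filter, Finset.Nat.mem_antidiagonalTuple] at ht
    have : ∑ i : Fin n, (t i : ℝ) = (m+1 : ℕ) := by
      rw [← Nat.cast_sum, ht.1]
    rw [this, Nat.factorial_succ]
    push_cast
    ring
  rw [key]
  have hcard : (n : ℝ) * sumN n m = ∑ _i : Fin n, sumN n m := by
    simp [Finset.sum_const, mul_comm]
  rw [hcard]
  apply Finset.sum_le_sum
  intro i _
  -- injection: t ↦ update t i (t i + 1)
  set φ : (Fin n → ℕ) → (Fin n → ℕ) := fun t => Function.update t i (t i + 1) with hφ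
  have hinj : ∀ a ∈ (Finset.Nat.antidiagonalTuple n m).filter (fun t => ∀ i, 0 < t i),
      ∀ b ∈ (Finset.Nat.antidiagonalTuple n m).filter (fun t => ∀ i, 0 < t i),
      φ a = φ b → a = b := by
    intro a _ b _ hab
    funext j
    by_cases hj : j = i
    · subst hj
      have := congrFun hab j
      simpa [φ, Function.update_self] using this
    · have := congrFun hab j
      simpa [φ, Function.update_of_ne hj] using this
  have himg : Finset.image φ ((Finset.Nat.antidiagonalTuple n m).filter (fun t => ∀ i, 0 < t i))
      ⊆ (Finset.Nat.antidiagonalTuple n (m+1)).filter (fun t => ∀ i, 0 < t i) := by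
    intro t' ht'
    rw [Finset.mem_image] at ht'
    obtain ⟨t, ht, rfl⟩ := ht'
    simp only [Finset.mem_filter, Finset.Nat.mem_antidiagonalTuple] at ht ⊢
    constructor
    · have : ∑ j, φ t j = (∑ j, t j) + 1 := by
        have : φ t = fun j => t j + if j = i then 1 else 0 := by
          funext j
          by_cases hj : j = i
          · subst hj; simp [φ]
          · simp [φ, Function.update_of_ne hj, hj]
        rw [this, Finset.sum_add_distrib]
        simp
      rw [this, ht.1]
    · intro j
      by_cases hj : j = i
      · subst hj; simp [φ]
      · simpa [φ, Function.update_of_ne hj] using ht.2 j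
  calc sumN n m
      = ∑ t' ∈ Finset.image φ ((Finset.Nat.antidiagonalTuple n m).filter (fun t => ∀ i, 0 < t i)),
          (t' i : ℝ) * ((m.factorial : ℝ) / ∏ j, ((t' j).factorial : ℝ)) := by
        rw [Finset.sum_image hinj]
        unfold sumN
        apply Finset.sum_congr rfl
        intro t ht
        have hupd : ∏ j, ((φ t j).factorial : ℝ)
            = ((t i + 1) : ℝ) * ∏ j, ((t j).factorial : ℝ) := by
          have h1 : ∏ j, ((φ t j).factorial : ℝ)
              = ((t i + 1).factorial : ℝ) * ∏ j ∈ Finset.univ \ {i}, ((t j).factorial : ℝ) := by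
            rw [show (fun j => ((φ t j).factorial : ℝ))
                = Function.update (fun j => ((t j).factorial : ℝ)) i ((t i + 1).factorial : ℝ) from ?_]
            · exact Finset.prod_update_of_mem (Finset.mem_univ i) _ _
            · funext j
              by_cases hj : j = i
              · subst hj; simp [φ]
              · simp [φ, Function.update_of_ne hj]
          have h2 : ∏ j, ((t j).factorial : ℝ)
              = ((t i).factorial : ℝ) * ∏ j ∈ Finset.univ \ {i}, ((t j).factorial : ℝ) := by
            exact Finset.prod_eq_mul_prod_sdiff_singleton_of_mem (Finset.mem_univ i) _
          rw [h1, h2, Nat.factorial_succ]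
          push_cast
          ring
        have hi : φ t i = t i + 1 := by simp [φ]
        rw [hi, hupd]
        have hne : ((t i : ℝ) + 1) ≠ 0 := by positivity
        have hpos := hprod_pos t
        push_cast
        field_simp
    _ ≤ _ := by
        apply Finset.sum_le_sum_of_subset_of_nonneg himg
        intro t' _ _
        positivity

lemma probFullUniform_mono (n : ℕ) (hn : 1 ≤ n) : Monotone (probFullUniform n) := by
  have step : ∀ m, probFullUniform n m ≤ probFullUniform n (m+1) := by
    intro m
    unfold probFullUniform
    have hnp : (0:ℝ) < (n:ℝ) := by exact_mod_cast hn
    have h := sumN_step n m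
    unfold sumN at h
    rw [one_div, one_div, pow_succ, mul_inv, mul_assoc]
    apply mul_le_mul_of_nonneg_left ?_ (by positivity)
    rw [le_inv_mul_iff₀ hnp]
    exact h
  exact monotone_nat_of_le_succ step

theorem stmt13 (n k : ℕ) (hn : 1 ≤ n) (hk : n ≤ k) (p0 : ℝ)
    (hp0 : p0 ∈ Set.Ico (0 : ℝ) 1) :
    probFullAlmostUniform n k p0 =
      ∑ k0 ∈ Finset.range (k - n + 1),
        (k.choose k0 : ℝ) * p0 ^ k0 * (1 - p0) ^ (k - k0) * probFullUniform n (k - k0) ∧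
    probFullAlmostUniform n k p0 ≤ probFullUniform n k := by
  obtain ⟨hp0a, hp0b⟩ := hp0
  have hnp : (0:ℝ) < (n:ℝ) := by exact_mod_cast hn
  have heq : probFullAlmostUniform n k p0 =
      ∑ k0 ∈ Finset.range (k - n + 1),
        (k.choose k0 : ℝ) * p0 ^ k0 * (1 - p0) ^ (k - k0) * probFullUniform n (k - k0) := by
    unfold probFullAlmostUniform probFullUniform
    apply Finset.sum_congr rfl
    intro k0 hk0
    have hk0k : k0 ≤ k := by
      rw [Finset.mem_range] at hk0
      omega
    simp only [mul_assoc, Finset.mul_sum]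
    apply Finset.sum_congr rfl
    intro t ht
    have hfact : (k.factorial : ℝ)
        = (k.choose k0 : ℝ) * (k0.factorial : ℝ) * ((k - k0).factorial : ℝ) := by
      rw [← Nat.cast_mul, ← Nat.cast_mul, Nat.choose_mul_factorial_mul_factorial hk0k]
    have hprod : (0:ℝ) < ∏ i, ((t i).factorial : ℝ) := by positivity
    have hk0f : (0:ℝ) < (k0.factorial : ℝ) := by positivity
    rw [hfact, div_pow]
    field_simp
  refine ⟨heq, ?_⟩
  rw [heq]
  have hPk : 0 ≤ probFullUniform n k := by
    unfold probFullUniform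
    apply mul_nonneg (by positivity)
    apply Finset.sum_nonneg
    intro t _
    positivity
  calc ∑ k0 ∈ Finset.range (k - n + 1),
        (k.choose k0 : ℝ) * p0 ^ k0 * (1 - p0) ^ (k - k0) * probFullUniform n (k - k0)
      ≤ ∑ k0 ∈ Finset.range (k - n + 1),
        (k.choose k0 : ℝ) * p0 ^ k0 * (1 - p0) ^ (k - k0) * probFullUniform n k := by
        apply Finset.sum_le_sum
        intro k0 _
        apply mul_le_mul_of_nonneg_left
        · exact probFullUniform_mono n hn (Nat.sub_le k k0)
        · have h1 : (0:ℝ) ≤ 1 - p0 := by linarith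
          positivity
    _ = (∑ k0 ∈ Finset.range (k - n + 1),
          p0 ^ k0 * (1 - p0) ^ (k - k0) * (k.choose k0 : ℝ)) * probFullUniform n k := by
        rw [Finset.sum_mul]
        apply Finset.sum_congr rfl
        intro k0 _
        ring
    _ ≤ 1 * probFullUniform n k := by
        apply mul_le_mul_of_nonneg_right ?_ hPk
        have hsub : Finset.range (k - n + 1) ⊆ Finset.range (k + 1) := by
          apply Finset.range_subset_range.mpr
          omega
        calc ∑ k0 ∈ Finset.range (k - n + 1),
              p0 ^ k0 * (1 - p0) ^ (k - k0) * (k.choose k0 : ℝ)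
            ≤ ∑ k0 ∈ Finset.range (k + 1),
              p0 ^ k0 * (1 - p0) ^ (k - k0) * (k.choose k0 : ℝ) := by
              apply Finset.sum_le_sum_of_subset_of_nonneg hsub
              intro k0 _ _
              have h1 : (0:ℝ) ≤ 1 - p0 := by linarith
              positivity
          _ = (p0 + (1 - p0)) ^ k := by rw [add_pow]
          _ = 1 := by norm_num
    _ = probFullUniform n k := one_mul _
end
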